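/- Let I, J ⊆ S, let b be a word on S such that pr(b) is I-reduced-J, and let b' be a word all of whose letters lie in J × {±1}. Set J₁ := {u ∈ J : pr(b) u pr(b)⁻¹ ∈ I}. Then π̂_I(b·b') = π̂_I(b) · ψ(π̂_{J₁}(b')), where ψ replaces each letter (u, ε) by (pr(b) u pr(b)⁻¹, ε) (each such pr(b) u pr(b)⁻¹ lies in I). -/

import Mathlib

open scoped Classical

namespace DGM

variable {S : Type*} {W : Type*} [Group W] {M : CoxeterMatrix S}

/-- The standard parabolic subgroup `W_I` of `W`, generated by the simple
reflections indexed by `I ⊆ S`. -/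
def WP (cs : CoxeterSystem M W) (I : Set S) : Subgroup W :=
  Subgroup.closure (cs.simple '' I)

/-- `w` is `I`-reduced: `ℓ(sw) > ℓ(w)` for every `s ∈ I`. -/
def IsLeftReduced (cs : CoxeterSystem M W) (I : Set S) (w : W) : Prop :=
  ∀ s ∈ I, cs.length w < cs.length (cs.simple s * w)

/-- `w` is reduced-`J`: `ℓ(ws) > ℓ(w)` for every `s ∈ J`. -/
def IsRightReduced (cs : CoxeterSystem M W) (J : Set S) (w : W) : Prop :=
  ∀ s ∈ J, cs.length w < cs.length (w * cs.simple s)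

/-- `t_I(w)`: the unique element of minimal length of the coset `W_I w`. -/
noncomputable def tP (cs : CoxeterSystem M W) (I : Set S) (w : W) : W :=
  Classical.epsilon (fun v =>
    (∃ u ∈ WP cs I, v = u * w) ∧
      ∀ v', (∃ u ∈ WP cs I, v' = u * w) → cs.length v ≤ cs.length v')

/-- `pr` of a word on `S × {±1}` : the product in `W` of its letters. -/
def prW (cs : CoxeterSystem M W) (b : List (S × Bool)) : W :=
  cs.wordProd (b.map Prod.fst)

/-- Auxiliary function for the retraction; the accumulator `w` is the image in `W`
of the prefix already read (i.e. `w_{j-1}`).  A letter `(s, ε)` is kept (as the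
element `i ∈ I` with `simple i = t_I(w_{j-1}) · s · t_I(w_{j-1})⁻¹`, with the sign `ε`)
exactly when the index is good, i.e. when this conjugate lies in `I`. -/
noncomputable def retrAux (cs : CoxeterSystem M W) (I : Set S) :
    W → List (S × Bool) → List (S × Bool)
  | _, [] => []
  | w, p :: rest =>
    (if h : ∃ i ∈ I, cs.simple i = tP cs I w * cs.simple p.1 * (tP cs I w)⁻¹ then
        [(h.choose, p.2)]
      else []) ++ retrAux cs I (w * cs.simple p.1) rest

/-- The retraction `π̂_I` of a word on `S × {±1}`; its letters lie in `I × {±1}`. -/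
noncomputable def retr (cs : CoxeterSystem M W) (I : Set S) (b : List (S × Bool)) :
    List (S × Bool) :=
  retrAux cs I 1 b

/-- The map `φ_w` applied letterwise to a word: each letter `u` is replaced by the
element of `S` whose simple reflection is `w · u · w⁻¹` (the sign is kept). -/
noncomputable def phiW (cs : CoxeterSystem M W) (w : W) (b : List (S × Bool)) :
    List (S × Bool) :=
  b.map (fun p =>
    (@Classical.epsilon S ⟨p.1⟩ (fun i : S => cs.simple i = w * cs.simple p.1 * w⁻¹), p.2))

noncomputable section

abbrev VV (S : Type*) := S →₀ ℝ

def ee (a : S) : VV S := Finsupp.single a 1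

def CC (M : CoxeterMatrix S) (a b : S) : ℝ := -Real.cos (Real.pi / M.M a b)

lemma CC_symm (M : CoxeterMatrix S) (a b : S) : CC M a b = CC M b a := by
  unfold CC
  rw [M.isSymm.apply a b]

lemma CC_diag (M : CoxeterMatrix S) (a : S) : CC M a a = 1 := by
  unfold CC
  rw [M.diagonal a]
  norm_num

def kform (M : CoxeterMatrix S) : VV S →ₗ[ℝ] VV S →ₗ[ℝ] ℝ :=
  Finsupp.lift (VV S →ₗ[ℝ] ℝ) ℝ S (fun a => Finsupp.lift ℝ ℝ S (fun b => CC M a b))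

lemma kform_ee (M : CoxeterMatrix S) (a b : S) : kform M (ee a) (ee b) = CC M a b := by
  unfold kform ee
  rw [Finsupp.lift_apply, Finsupp.sum_single_index (by simp)]
  rw [one_smul, Finsupp.lift_apply, Finsupp.sum_single_index (by simp)]
  rw [one_smul]

def sigmaE (M : CoxeterMatrix S) (a : S) : Module.End ℝ (VV S) :=
  LinearMap.id - ((kform M).flip (ee a)).smulRight ((2:ℝ) • ee a)

lemma sigmaE_apply (M : CoxeterMatrix S) (a : S) (v : VV S) :
    sigmaE M a v = v - (2 * kform M v (ee a)) • ee a := by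
  unfold sigmaE
  show v - (kform M v (ee a)) • ((2:ℝ) • ee a) = _
  rw [smul_smul, mul_comm]

lemma sigmaE_sq (M : CoxeterMatrix S) (a : S) : sigmaE M a * sigmaE M a = 1 := by
  apply LinearMap.ext
  intro v
  rw [Module.End.mul_apply, Module.End.one_apply, sigmaE_apply, sigmaE_apply, map_sub, map_smul,
    LinearMap.sub_apply, LinearMap.smul_apply, kform_ee, CC_diag, smul_eq_mul, mul_one]
  module

lemma sigmaE_rel (M : CoxeterMatrix S) {a b : S} (hab : a ≠ b) (hm2 : 2 ≤ M.M a b) :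
    (sigmaE M a * sigmaE M b) ^ M.M a b = 1 := by
  set m := M.M a b with hm
  set θ : ℝ := Real.pi / m with hθ
  set c : ℝ := Real.cos θ with hcc
  have hmR : (2:ℝ) ≤ (m:ℝ) := by exact_mod_cast hm2
  have hθpos : 0 < θ := by
    rw [hθ]
    apply div_pos Real.pi_pos
    linarith
  have hθlt : θ < Real.pi := by
    rw [hθ]
    apply div_lt_self Real.pi_pos
    linarith
  have hs : 0 < Real.sin θ := Real.sin_pos_of_pos_of_lt_pi hθpos hθlt
  have hsc : Real.sin θ ^ 2 + c ^ 2 = 1 := Real.sin_sq_add_cos_sq θ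
  have h1c : 1 - c^2 ≠ 0 := by nlinarith
  have kaa : kform M (ee a) (ee a) = 1 := by rw [kform_ee, CC_diag]
  have kbb : kform M (ee b) (ee b) = 1 := by rw [kform_ee, CC_diag]
  have kab : kform M (ee a) (ee b) = -c := by rw [kform_ee]; unfold CC; rw [← hm, ← hθ, hcc]
  have kba : kform M (ee b) (ee a) = -c := by rw [kform_ee, CC_symm]; unfold CC; rw [← hm, ← hθ, hcc]
  set A := sigmaE M a * sigmaE M b with hA
  have hsa : sigmaE M a (ee a) = ee a - (2:ℝ) • ee a := by
    rw [sigmaE_apply, kaa, mul_one]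
  have hsb : sigmaE M b (ee b) = ee b - (2:ℝ) • ee b := by
    rw [sigmaE_apply, kbb, mul_one]
  have hsab : sigmaE M a (ee b) = ee b + (2*c) • ee a := by
    rw [sigmaE_apply, kba]
    module
  have hsba : sigmaE M b (ee a) = ee a + (2*c) • ee b := by
    rw [sigmaE_apply, kab]
    module
  have hAa : A (ee a) = (4*c^2-1) • ee a + (2*c) • ee b := by
    rw [hA, Module.End.mul_apply, hsba, map_add, map_smul, hsa, hsab]
    module
  have hAb : A (ee b) = (-(2*c)) • ee a + (-1 : ℝ) • ee b := by
    rw [hA, Module.End.mul_apply, hsb, map_sub, map_smul, hsab]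
    module
  have hAperp : ∀ u : VV S, kform M u (ee a) = 0 → kform M u (ee b) = 0 → A u = u := by
    intro u h1 h2
    have hb : sigmaE M b u = u := by
      rw [sigmaE_apply, h2]
      module
    rw [hA, Module.End.mul_apply, hb, sigmaE_apply, h1]
    module
  have T1 : ∀ x : ℝ, Real.sin (x + 2*θ) = (4*c^2-1) * Real.sin x - 2*c*Real.sin (x - θ) := by
    intro x
    rw [Real.sin_add, Real.sin_sub, Real.cos_two_mul, Real.sin_two_mul]
    ring
  have T2 : ∀ x : ℝ, Real.sin (x + θ) = 2*c*Real.sin x - Real.sin (x - θ) := by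
    intro x
    rw [Real.sin_add, Real.sin_sub]
    ring
  set p : ℝ → ℝ := fun k => Real.sin ((2*k+1)*θ)/Real.sin θ with hp
  set q : ℝ → ℝ := fun k => Real.sin ((2*k)*θ)/Real.sin θ with hq
  set s' : ℝ → ℝ := fun k => Real.sin ((1-2*k)*θ)/Real.sin θ with hs'
  have pr : ∀ x : ℝ, p (x+1) = (4*c^2-1) * p x - 2*c*q x := by
    intro x
    simp only [hp, hq]
    rw [show (2*(x+1)+1)*θ = ((2*x+1)*θ) + 2*θ by ring, T1,
      show (2*x+1)*θ - θ = (2*x)*θ by ring]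
    ring
  have qr : ∀ x : ℝ, q (x+1) = 2*c*p x - q x := by
    intro x
    simp only [hp, hq]
    rw [show (2*(x+1))*θ = ((2*x+1)*θ) + θ by ring, T2,
      show (2*x+1)*θ - θ = (2*x)*θ by ring]
    ring
  have q'r : ∀ x : ℝ, q (x+1) = (4*c^2-1) * q x + 2*c*s' x := by
    intro x
    simp only [hq, hs']
    rw [show (2*(x+1))*θ = ((2*x)*θ) + 2*θ by ring, T1,
      show (2*x)*θ - θ = -((1-2*x)*θ) by ring, Real.sin_neg]
    ring
  have s'r : ∀ x : ℝ, s' (x+1) = 2*c*(-(q x)) - s' x := by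
    intro x
    simp only [hq, hs']
    rw [show (1-2*(x+1))*θ = -(((2*x)*θ) + θ) by ring, Real.sin_neg, T2,
      show (2*x)*θ - θ = -((1-2*x)*θ) by ring, Real.sin_neg]
    ring
  have Ak : ∀ k : ℕ, (A^k) (ee a) = p k • ee a + q k • ee b ∧
      (A^k) (ee b) = (-(q k)) • ee a + s' k • ee b := by
    intro k
    induction k with
    | zero =>
      have hp0 : p ((0:ℕ):ℝ) = 1 := by
        simp only [hp]
        rw [show (2*((0:ℕ):ℝ)+1)*θ = θ by push_cast; ring]
        exact div_self hs.ne'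
      have hq0 : q ((0:ℕ):ℝ) = 0 := by
        simp only [hq]
        rw [show (2*((0:ℕ):ℝ))*θ = 0 by push_cast; ring]
        rw [Real.sin_zero, zero_div]
      have hs0 : s' ((0:ℕ):ℝ) = 1 := by
        simp only [hs']
        rw [show (1-2*((0:ℕ):ℝ))*θ = θ by push_cast; ring]
        exact div_self hs.ne'
      constructor
      · show ee a = _
        rw [hp0, hq0]
        module
      · show ee b = _
        rw [hs0, hq0]
        module
    | succ k ih =>
      obtain ⟨iha, ihb⟩ := ih
      have hcast : ((k+1:ℕ):ℝ) = (k:ℝ)+1 := by push_cast; ring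
      constructor
      · rw [pow_succ', Module.End.mul_apply, iha, map_add, map_smul, map_smul, hAa, hAb,
          hcast, pr, qr]
        module
      · rw [pow_succ', Module.End.mul_apply, ihb, map_add, map_smul, map_smul, hAa, hAb,
          hcast, q'r, s'r]
        module
  have pm : p m = 1 := by
    simp only [hp]
    rw [show (2*(m:ℝ)+1)*θ = θ + 2*Real.pi by
      rw [hθ]
      field_simp
      ring]
    rw [Real.sin_add_two_pi]
    exact div_self hs.ne'
  have qm : q m = 0 := by
    simp only [hq]
    rw [show (2*(m:ℝ))*θ = 2*Real.pi by
      rw [hθ]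
      field_simp]
    rw [Real.sin_two_pi, zero_div]
  have s'm : s' m = 1 := by
    simp only [hs']
    rw [show (1-2*(m:ℝ))*θ = θ - 2*Real.pi by
      rw [hθ]
      field_simp]
    rw [Real.sin_sub_two_pi]
    exact div_self hs.ne'
  -- decomposition of an arbitrary vector
  apply LinearMap.ext
  intro v
  rw [Module.End.one_apply]
  set g := kform M v (ee a) with hg
  set h := kform M v (ee b) with hh
  set x := (g + c*h)/(1-c^2) with hx
  set y := (h + c*g)/(1-c^2) with hy
  set u := v - x • ee a - y • ee b with hu
  have hua : kform M u (ee a) = 0 := by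
    rw [hu, map_sub, map_sub, map_smul, map_smul, LinearMap.sub_apply, LinearMap.sub_apply,
      LinearMap.smul_apply, LinearMap.smul_apply, kaa, kba, ← hg, hx, hy]
    field_simp
    linear_combination (-g) * (inv_mul_cancel₀ h1c)
  have hub : kform M u (ee b) = 0 := by
    rw [hu, map_sub, map_sub, map_smul, map_smul, LinearMap.sub_apply, LinearMap.sub_apply,
      LinearMap.smul_apply, LinearMap.smul_apply, kab, kbb, ← hh, hx, hy]
    field_simp
    linear_combination (-h) * (inv_mul_cancel₀ h1c)
  have hv : v = x • ee a + y • ee b + u := by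
    rw [hu]
    module
  have hAu : ∀ k : ℕ, (A^k) u = u := by
    intro k
    induction k with
    | zero => rfl
    | succ k ih =>
      rw [pow_succ', Module.End.mul_apply, ih, hAperp u hua hub]
  rw [hv, map_add, map_add, map_smul, map_smul, (Ak m).1, (Ak m).2, hAu m, pm, qm, s'm]
  module

lemma sigmaE_liftable (M : CoxeterMatrix S) : M.IsLiftable (fun a => sigmaE M a) := by
  intro a b
  rcases eq_or_ne a b with rfl | hab
  · rw [M.diagonal a, pow_one]
    exact sigmaE_sq M a
  · rcases Nat.eq_zero_or_pos (M.M a b) with h0 | hpos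
    · rw [h0, pow_zero]
    · have h1 : M.M a b ≠ 1 := M.off_diagonal a b hab
      have hm2 : 2 ≤ M.M a b := by omega
      exact sigmaE_rel M hab hm2

/-- The simple reflections of a Coxeter system are pairwise distinct. -/
lemma simple_injective {W : Type*} [Group W] {M : CoxeterMatrix S} (cs : CoxeterSystem M W) :
    Function.Injective cs.simple := by
  classical
  intro i j hij
  by_contra hne
  have h := congrArg (cs.lift ⟨fun a => sigmaE M a, sigmaE_liftable M⟩) hij
  rw [cs.lift_apply_simple, cs.lift_apply_simple] at h
  have h2 := congrArg (fun f : Module.End ℝ (VV S) => (f (ee i)) i) h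
  rw [sigmaE_apply, sigmaE_apply, kform_ee, kform_ee, CC_diag] at h2
  have hji : (ee j) i = 0 := by
    unfold ee
    rw [Finsupp.single_apply, if_neg (fun hh => hne hh.symm)]
  have hii : (ee i) i = 1 := by
    unfold ee
    rw [Finsupp.single_apply, if_pos rfl]
  rw [Finsupp.sub_apply, Finsupp.sub_apply, Finsupp.smul_apply, Finsupp.smul_apply,
    hii, hji] at h2
  simp at h2

private lemma mul_eq_iff' {G : Type*} [Group G] (x y z t : G) :
    x * t * y = z ↔ t = x⁻¹ * z * y⁻¹ := by
  constructor
  · intro h; rw [← h]; group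
  · intro h; rw [h]; group

/-- Functions from `W` to `ZMod 2`, as a multiplicative group. -/
abbrev NN (W : Type*) := W → Multiplicative (ZMod 2)

/-- `W` acts on `NN W` by precomposition with conjugation. -/
def actW (W : Type*) [Group W] : W →* MulAut (NN W) where
  toFun u :=
    { toFun := fun f t => f (u⁻¹ * t * u)
      invFun := fun f t => f (u * t * u⁻¹)
      left_inv := by intro f; funext t; simp [mul_assoc]
      right_inv := by intro f; funext t; simp [mul_assoc]
      map_mul' := by intro f g; rfl }
  map_one' := by
    refine MulEquiv.ext fun f => funext fun t => ?_
    simp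
  map_mul' := by
    intro u v
    refine MulEquiv.ext fun f => funext fun t => ?_
    simp [MulAut.mul_apply, mul_assoc]

@[simp] lemma actW_apply (u : W) (f : NN W) (t : W) :
    actW W u f t = f (u⁻¹ * t * u) := rfl

variable (cs : CoxeterSystem M W)

def deltaF (i : S) : NN W := fun t => Multiplicative.ofAdd (if t = cs.simple i then 1 else 0)

/-- Power formula in the semidirect product. -/
lemma sd_pow (n : NN W) (g : W) (k : ℕ) :
    ((⟨n, g⟩ : NN W ⋊[actW W] W) ^ k) =
      ⟨∏ r ∈ Finset.range k, actW W (g ^ r) n, g ^ k⟩ := by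
  induction k with
  | zero => simp
  | succ k ih =>
    rw [pow_succ', ih, SemidirectProduct.mul_def]
    congr 1
    · show n * actW W g (∏ r ∈ Finset.range k, actW W (g ^ r) n) = _
      rw [map_prod]
      have h1 : ∀ r, actW W g (actW W (g ^ r) n) = actW W (g ^ (r + 1)) n := by
        intro r
        rw [pow_succ', map_mul]
        rfl
      simp_rw [h1]
      rw [Finset.prod_range_succ' (fun r => actW W (g ^ r) n) k, pow_zero, map_one, mul_comm]
      rfl
    · rw [← pow_succ']

private lemma sum_range_double (g : ℕ → ZMod 2) (m : ℕ) :
    ∑ r ∈ Finset.range m, (g (2*r) + g (2*r+1)) = ∑ k ∈ Finset.range (2*m), g k := by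
  induction m with
  | zero => simp
  | succ m ih =>
    rw [Finset.sum_range_succ, ih, mul_add, mul_one]
    rw [Finset.sum_range_succ, Finset.sum_range_succ]
    ring_nf

lemma liftable : M.IsLiftable (fun i => (⟨deltaF cs i, cs.simple i⟩ : NN W ⋊[actW W] W)) := by
  intro i j
  show ((⟨deltaF cs i, cs.simple i⟩ : NN W ⋊[actW W] W) * ⟨deltaF cs j, cs.simple j⟩) ^ M.M i j = 1
  rw [SemidirectProduct.mul_def, sd_pow]
  set m := M.M i j with hm
  set c := cs.simple i * cs.simple j with hc
  have hc2 : c ^ m = 1 := cs.simple_mul_simple_pow i j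
  set d := cs.simple j * cs.simple i with hd
  have hdm : d ^ m = 1 := cs.simple_mul_simple_pow' i j
  have hcd : c⁻¹ = d := by rw [hc, hd, mul_inv_rev, cs.inv_simple, cs.inv_simple]
  set a : ℕ → W := fun k => cs.simple i * d ^ k with ha
  have hstep : ∀ n : ℕ, c * (cs.simple i * d ^ n) * d = cs.simple i * d ^ (n+2) := by
    intro n
    have h1 : c * cs.simple i = cs.simple i * d := by
      rw [hc, hd, mul_assoc]
    calc c * (cs.simple i * d ^ n) * d = (c * cs.simple i) * d ^ n * d := by group
      _ = cs.simple i * (d * d ^ n * d) := by rw [h1]; group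
      _ = cs.simple i * d ^ (n+2) := by
          congr 1
          rw [← pow_succ', ← pow_succ]
  have e2 : ∀ k : ℕ, c ^ k * cs.simple i * d ^ k = a (2*k) := by
    intro k
    induction k with
    | zero => simp [ha]
    | succ k ih =>
      have h2 : c ^ (k+1) * cs.simple i * d ^ (k+1) = c * (c ^ k * cs.simple i * d ^ k) * d := by
        rw [pow_succ' c, pow_succ d]; group
      rw [h2, ih, ha]
      show c * (cs.simple i * d ^ (2*k)) * d = cs.simple i * d ^ (2*(k+1))
      rw [hstep, show 2*(k+1) = 2*k+2 by ring]
  have hsjsi : cs.simple i * cs.simple j * cs.simple i = cs.simple i * d := by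
    rw [hd, mul_assoc]
  have e3 : ∀ k : ℕ, c ^ k * (cs.simple i * cs.simple j * cs.simple i) * d ^ k = a (2*k+1) := by
    intro k
    rw [hsjsi]
    induction k with
    | zero => simp [ha]
    | succ k ih =>
      have h2 : c ^ (k+1) * (cs.simple i * d) * d ^ (k+1)
          = c * (c ^ k * (cs.simple i * d) * d ^ k) * d := by
        rw [pow_succ' c, pow_succ d]; group
      rw [h2, ih, ha]
      show c * (cs.simple i * d ^ (2*k+1)) * d = cs.simple i * d ^ (2*(k+1)+1)
      rw [hstep, show 2*(k+1)+1 = (2*k+1)+2 by ring]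
  have key : ∀ (r : ℕ) (t' : W),
      (actW W (c ^ r) (deltaF cs i * actW W (cs.simple i) (deltaF cs j))) t'
      = Multiplicative.ofAdd
          ((if t' = a (2*r) then 1 else 0) + (if t' = a (2*r+1) then (1 : ZMod 2) else 0)) := by
    intro r t'
    have e1 : (c ^ r)⁻¹ = d ^ r := by rw [← hcd, inv_pow]
    have e1' : (d ^ r)⁻¹ = c ^ r := by rw [← e1, inv_inv]
    have cond1 : ((c^r)⁻¹ * t' * c^r = cs.simple i) ↔ (t' = a (2*r)) := by
      rw [e1, mul_eq_iff', e1', e1, e2]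
    have cond2 : ((cs.simple i)⁻¹ * ((c^r)⁻¹ * t' * c^r) * cs.simple i = cs.simple j)
        ↔ (t' = a (2*r+1)) := by
      rw [cs.inv_simple, mul_eq_iff', cs.inv_simple, e1, mul_eq_iff', e1', e1]
      rw [e3]
    show deltaF cs i ((c^r)⁻¹ * t' * c^r)
        * deltaF cs j ((cs.simple i)⁻¹ * ((c^r)⁻¹ * t' * c^r) * cs.simple i) = _
    show Multiplicative.ofAdd (if (c^r)⁻¹ * t' * c^r = cs.simple i then (1:ZMod 2) else 0)
        * Multiplicative.ofAdd
            (if (cs.simple i)⁻¹ * ((c^r)⁻¹ * t' * c^r) * cs.simple i = cs.simple j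
              then (1:ZMod 2) else 0) = _
    rw [← ofAdd_add, if_congr cond1 rfl rfl, if_congr cond2 rfl rfl]
  refine SemidirectProduct.ext ?_ (by simpa using hc2)
  show (∏ r ∈ Finset.range m, actW W (c ^ r) (deltaF cs i * actW W (cs.simple i) (deltaF cs j)))
      = (1 : NN W ⋊[actW W] W).left
  funext t'
  rw [Finset.prod_apply]
  simp_rw [key]
  rw [← ofAdd_sum]
  have ha2 : ∀ k, a (m + k) = a k := by
    intro k
    show cs.simple i * d ^ (m + k) = cs.simple i * d ^ k
    rw [pow_add, hdm, one_mul]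
  rw [sum_range_double (fun k => if t' = a k then (1:ZMod 2) else 0) m]
  rw [show 2*m = m + m by ring, Finset.sum_range_add]
  simp_rw [ha2]
  rw [← Finset.sum_add_distrib]
  simp [CharTwo.add_self_eq_zero]

/-- The reflection-parity crossed homomorphism packaged as a homomorphism
to a semidirect product. -/
def PhiSD : W →* NN W ⋊[actW W] W :=
  cs.lift ⟨fun i => ⟨deltaF cs i, cs.simple i⟩, liftable cs⟩

lemma PhiSD_simple (i : S) : PhiSD cs (cs.simple i) = ⟨deltaF cs i, cs.simple i⟩ :=
  cs.lift_apply_simple (liftable cs) i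

lemma PhiSD_right (w : W) : (PhiSD cs w).right = w := by
  have h : SemidirectProduct.rightHom.comp (PhiSD cs) = MonoidHom.id W := by
    apply cs.ext_simple
    intro i
    simp [PhiSD_simple]
  calc (PhiSD cs w).right = (SemidirectProduct.rightHom.comp (PhiSD cs)) w := rfl
    _ = w := by rw [h]; rfl

/-- The parity function: `FF cs w t` is the mod-2 number of times the reflection `t` occurs
in the left inversion sequence of any word for `w`. -/
def FF (w t : W) : ZMod 2 := Multiplicative.toAdd ((PhiSD cs w).left t)

lemma FF_mul (u v t : W) : FF cs (u * v) t = FF cs u t + FF cs v (u⁻¹ * t * u) := by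
  unfold FF
  rw [map_mul, SemidirectProduct.mul_left]
  rw [PhiSD_right]
  rfl

lemma FF_one (t : W) : FF cs 1 t = 0 := by
  unfold FF
  rw [map_one]
  rfl

lemma FF_simple (i : S) (t : W) : FF cs (cs.simple i) t = if t = cs.simple i then 1 else 0 := by
  unfold FF
  rw [PhiSD_simple]
  rfl

lemma FF_inv (u t : W) : FF cs u⁻¹ t = FF cs u (u * t * u⁻¹) := by
  have h := FF_mul cs u u⁻¹ (u * t * u⁻¹)
  rw [mul_inv_cancel, FF_one] at h
  have h2 : u⁻¹ * (u * t * u⁻¹) * u = t := by group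
  rw [h2] at h
  have h4 : ∀ x y : ZMod 2, 0 = x + y → y = x := by decide
  exact h4 _ _ h

lemma FF_refl {t : W} (ht : cs.IsReflection t) : FF cs t t = 1 := by
  obtain ⟨u, i, rfl⟩ := ht
  have A := FF_mul cs u (cs.simple i * u⁻¹) (u * cs.simple i * u⁻¹)
  have e0 : u * (cs.simple i * u⁻¹) = u * cs.simple i * u⁻¹ := (mul_assoc _ _ _).symm
  have e1 : u⁻¹ * (u * cs.simple i * u⁻¹) * u = cs.simple i := by group
  rw [e0, e1] at A
  have B := FF_mul cs (cs.simple i) u⁻¹ (cs.simple i)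
  have e2 : (cs.simple i)⁻¹ * cs.simple i * cs.simple i = cs.simple i := by group
  rw [e2] at B
  rw [B] at A
  rw [FF_simple, if_pos rfl] at A
  rw [FF_inv] at A
  rw [A]
  have h4 : ∀ x : ZMod 2, x + (1 + x) = 1 := by decide
  exact h4 _

lemma FF_count (ω : List S) (t : W) :
    FF cs (cs.wordProd ω) t = (List.count t (cs.leftInvSeq ω) : ZMod 2) := by
  induction ω generalizing t with
  | nil => rw [CoxeterSystem.wordProd_nil, FF_one, CoxeterSystem.leftInvSeq_nil]; simp
  | cons i ω ih =>
    rw [CoxeterSystem.wordProd_cons, FF_mul, FF_simple]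
    have hlis : cs.leftInvSeq (i :: ω)
        = cs.simple i :: List.map (MulAut.conj (cs.simple i)) (cs.leftInvSeq ω) := rfl
    rw [hlis]
    rw [List.count_cons]
    have hc : List.count t (List.map (⇑(MulAut.conj (cs.simple i))) (cs.leftInvSeq ω))
        = List.count ((cs.simple i)⁻¹ * t * cs.simple i) (cs.leftInvSeq ω) := by
      have hfx : MulAut.conj (cs.simple i) ((cs.simple i)⁻¹ * t * cs.simple i) = t := by
        rw [MulAut.conj_apply]
        group
      calc List.count t (List.map (⇑(MulAut.conj (cs.simple i))) (cs.leftInvSeq ω))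
          = List.count (MulAut.conj (cs.simple i) ((cs.simple i)⁻¹ * t * cs.simple i))
              (List.map (⇑(MulAut.conj (cs.simple i))) (cs.leftInvSeq ω)) := by rw [hfx]
        _ = List.count ((cs.simple i)⁻¹ * t * cs.simple i) (cs.leftInvSeq ω) :=
            List.count_map_of_injective _ _ (MulAut.conj (cs.simple i)).injective _
    rw [hc, ih]
    simp only [List.count_cons, beq_iff_eq]
    push_cast
    rw [add_comm]
    congr 1
    by_cases h : t = cs.simple i
    · subst h
      simp
    · rw [if_neg h, if_neg (fun hh : cs.simple i = t => h hh.symm)]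

lemma length_lt_of_FF_eq_one {w t : W} (h : FF cs w t = 1) :
    cs.length (t * w) < cs.length w := by
  obtain ⟨ω, hred, rfl⟩ := cs.exists_reduced_word' w
  rw [FF_count] at h
  have hmem : t ∈ cs.leftInvSeq ω := by
    by_contra hmem
    rw [List.count_eq_zero_of_not_mem hmem] at h
    simp at h
  exact (cs.isLeftInversion_of_mem_leftInvSeq hred hmem).2

lemma FF_eq_one_of_length_lt {w t : W} (ht : cs.IsReflection t)
    (h : cs.length (t * w) < cs.length w) : FF cs w t = 1 := by
  by_contra h0
  have h1 : FF cs w t = 0 := by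
    have hx : ∀ x : ZMod 2, x = 0 ∨ x = 1 := by decide
    rcases hx (FF cs w t) with h' | h'
    · exact h'
    · exact absurd h' h0
  have hw : t * (t * w) = w := by rw [← mul_assoc, ht.mul_self, one_mul]
  have h2 := FF_mul cs t (t * w) t
  rw [hw, h1, FF_refl cs ht] at h2
  have h3 : t⁻¹ * t * t = t := by group
  rw [h3] at h2
  have h4 : ∀ x : ZMod 2, 0 = 1 + x → x = 1 := by decide
  have h5 := length_lt_of_FF_eq_one cs (h4 _ h2)
  rw [hw] at h5
  omega

/-- Strong exchange, left version. -/
lemma strong_exchange_left (ω : List S) {t : W} (ht : cs.IsReflection t)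
    (h : cs.length (t * cs.wordProd ω) < cs.length (cs.wordProd ω)) :
    ∃ j < ω.length, t * cs.wordProd ω = cs.wordProd (ω.eraseIdx j) := by
  have h1 : FF cs (cs.wordProd ω) t = 1 := FF_eq_one_of_length_lt cs ht h
  rw [FF_count] at h1
  have hmem : t ∈ cs.leftInvSeq ω := by
    by_contra hmem
    rw [List.count_eq_zero_of_not_mem hmem] at h1
    simp at h1
  obtain ⟨j, hj, hget⟩ := List.mem_iff_getElem.mp hmem
  rw [cs.length_leftInvSeq] at hj
  refine ⟨j, hj, ?_⟩
  have hgetD : (cs.leftInvSeq ω).getD j 1 = t := by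
    rw [List.getD_eq_getElem _ _ (by rw [cs.length_leftInvSeq]; exact hj)]
    exact hget
  rw [← hgetD]
  exact cs.getD_leftInvSeq_mul_wordProd ω j

/-- Strong exchange, right version. -/
lemma strong_exchange_right (ω : List S) {t : W} (ht : cs.IsReflection t)
    (h : cs.length (cs.wordProd ω * t) < cs.length (cs.wordProd ω)) :
    ∃ j < ω.length, cs.wordProd ω * t = cs.wordProd (ω.eraseIdx j) := by
  have h1 : FF cs (cs.wordProd ω.reverse) t = 1 := by
    apply FF_eq_one_of_length_lt cs ht
    rw [CoxeterSystem.wordProd_reverse]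
    have e1 : t * (cs.wordProd ω)⁻¹ = (cs.wordProd ω * t)⁻¹ := by
      rw [mul_inv_rev, ht.inv]
    rw [e1, cs.length_inv, cs.length_inv]
    exact h
  rw [FF_count] at h1
  have hmem : t ∈ cs.leftInvSeq ω.reverse := by
    by_contra hmem
    rw [List.count_eq_zero_of_not_mem hmem] at h1
    simp at h1
  rw [cs.leftInvSeq_reverse] at hmem
  rw [List.mem_reverse] at hmem
  obtain ⟨j, hj, hget⟩ := List.mem_iff_getElem.mp hmem
  rw [cs.length_rightInvSeq] at hj
  refine ⟨j, hj, ?_⟩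
  have hgetD : (cs.rightInvSeq ω).getD j 1 = t := by
    rw [List.getD_eq_getElem _ _ (by rw [cs.length_rightInvSeq]; exact hj)]
    exact hget
  rw [← hgetD]
  exact cs.wordProd_mul_getD_rightInvSeq ω j

/-! ### Part C: parabolic subgroups and minimal coset representatives -/

variable (cs : CoxeterSystem M W)

lemma simple_mem_WP {I : Set S} {i : S} (hi : i ∈ I) : cs.simple i ∈ WP cs I :=
  Subgroup.subset_closure ⟨i, hi, rfl⟩

lemma wordProd_mem_WP {I : Set S} {ω : List S} (hω : ∀ i ∈ ω, i ∈ I) :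
    cs.wordProd ω ∈ WP cs I := by
  induction ω with
  | nil =>
    rw [cs.wordProd_nil]
    exact Subgroup.one_mem _
  | cons i ω ih =>
    rw [cs.wordProd_cons]
    exact Subgroup.mul_mem _ (simple_mem_WP cs (hω i (by simp)))
      (ih fun a ha => hω a (by simp [ha]))

lemma isReduced_nil : cs.IsReduced ([] : List S) := by
  simp [CoxeterSystem.IsReduced]

/-- Any word has a reduced subword with the same product. -/
lemma exists_reduced_subword (ω : List S) :
    ∃ ω', cs.IsReduced ω' ∧ cs.wordProd ω' = cs.wordProd ω ∧ ∀ i ∈ ω', i ∈ ω := by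
  generalize hn : ω.length = n
  induction n using Nat.strong_induction_on generalizing ω with
  | _ n ih =>
  subst hn
  by_cases hred : cs.IsReduced ω
  · exact ⟨ω, hred, rfl, fun i hi => hi⟩
  -- ω is nonempty
  have hlen1 : 1 ≤ ω.length := by
    rcases ω with _ | ⟨i, ω⟩
    · exact absurd (isReduced_nil cs) hred
    · simp
  have hex : ∃ j, ¬ cs.IsReduced (ω.take (j+1)) := by
    refine ⟨ω.length - 1, ?_⟩
    rw [show ω.length - 1 + 1 = ω.length by omega, List.take_length]
    exact hred
  classical
  set j := Nat.find hex with hj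
  have hjspec : ¬ cs.IsReduced (ω.take (j+1)) := Nat.find_spec hex
  have hjlt : j < ω.length := by
    have : j ≤ ω.length - 1 := Nat.find_min' hex (by
      rw [show ω.length - 1 + 1 = ω.length by omega, List.take_length]
      exact hred)
    omega
  have hχred : cs.IsReduced (ω.take j) := by
    rcases Nat.eq_zero_or_pos j with h0 | hpos
    · rw [h0, List.take_zero]
      exact isReduced_nil cs
    · have := Nat.find_min hex (show j - 1 < j by omega)
      rw [show j - 1 + 1 = j by omega] at this
      exact not_not.mp this
  set χ := ω.take j with hχ
  set i := ω.get ⟨j, hjlt⟩ with hi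
  have htake : ω.take (j+1) = χ ++ [i] := by
    rw [hχ, hi]
    rw [List.take_succ]
    congr
    rw [List.getElem?_eq_getElem hjlt]
    rfl
  have hχlen : χ.length = j := by
    rw [hχ, List.length_take]
    omega
  have hulen : cs.length (cs.wordProd χ) = j := by
    rw [hχred]
    exact hχlen
  have hdesc : cs.length (cs.wordProd χ * cs.simple i) < cs.length (cs.wordProd χ) := by
    rcases cs.length_mul_simple (cs.wordProd χ) i with h | h
    · exfalso
      apply hjspec
      rw [htake]
      show cs.length (cs.wordProd (χ ++ [i])) = (χ ++ [i]).length
      rw [cs.wordProd_append, cs.wordProd_singleton, h, hulen]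
      simp [hχlen]
    · omega
  obtain ⟨l, hl, hlerase⟩ :=
    strong_exchange_right cs χ (cs.isReflection_simple i) hdesc
  -- the new shorter word
  set ω'' := χ.eraseIdx l ++ ω.drop (j+1) with hω''
  have hprod : cs.wordProd ω'' = cs.wordProd ω := by
    rw [hω'', cs.wordProd_append, ← hlerase]
    have : cs.wordProd χ * cs.simple i = cs.wordProd (ω.take (j+1)) := by
      rw [htake, cs.wordProd_append, cs.wordProd_singleton]
    rw [this, ← cs.wordProd_append, List.take_append_drop]
  have hlen'' : ω''.length < ω.length := by
    have e := List.length_eraseIdx_add_one hl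
    rw [hω'', List.length_append, List.length_drop]
    omega
  have hsub : ∀ a ∈ ω'', a ∈ ω := by
    intro a ha
    rw [hω'', List.mem_append] at ha
    rcases ha with ha | ha
    · exact (List.take_sublist j ω).mem ((List.eraseIdx_sublist χ l).mem ha)
    · exact (List.drop_sublist (j+1) ω).mem ha
  obtain ⟨ω', h1, h2, h3⟩ := ih ω''.length hlen'' ω'' rfl
  exact ⟨ω', h1, h2.trans hprod, fun a ha => hsub a (h3 a ha)⟩

lemma exists_reduced_word_subset {I : Set S} {w : W} (hw : w ∈ WP cs I) :
    ∃ ω, (∀ i ∈ ω, i ∈ I) ∧ cs.IsReduced ω ∧ w = cs.wordProd ω := by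
  have hword : ∃ ω : List S, (∀ i ∈ ω, i ∈ I) ∧ w = cs.wordProd ω := by
    refine Subgroup.closure_induction ?_ ?_ ?_ ?_ hw
    · rintro x ⟨i, hi, rfl⟩
      exact ⟨[i], by simpa using hi, by rw [cs.wordProd_singleton]⟩
    · exact ⟨[], by simp, by rw [cs.wordProd_nil]⟩
    · rintro x y _ _ ⟨ω₁, hω₁, rfl⟩ ⟨ω₂, hω₂, rfl⟩
      refine ⟨ω₁ ++ ω₂, ?_, by rw [cs.wordProd_append]⟩
      intro a ha
      rcases List.mem_append.mp ha with h | h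
      · exact hω₁ a h
      · exact hω₂ a h
    · rintro x _ ⟨ω, hω, rfl⟩
      refine ⟨ω.reverse, fun a ha => hω a (List.mem_reverse.mp ha), ?_⟩
      rw [cs.wordProd_reverse]
  obtain ⟨ω, hωI, rfl⟩ := hword
  obtain ⟨ω', h1, h2, h3⟩ := exists_reduced_subword cs ω
  exact ⟨ω', fun a ha => hωI a (h3 a ha), h1, h2.symm⟩

lemma exists_min_coset (I : Set S) (w : W) :
    ∃ m, (∃ u ∈ WP cs I, m = u * w) ∧
      ∀ v, (∃ u ∈ WP cs I, v = u * w) → cs.length m ≤ cs.length v := by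
  classical
  have hex : ∃ n, ∃ m, (∃ u ∈ WP cs I, m = u * w) ∧ cs.length m = n :=
    ⟨cs.length w, w, ⟨1, Subgroup.one_mem _, (one_mul w).symm⟩, rfl⟩
  obtain ⟨m, hm, hlen⟩ := Nat.find_spec hex
  refine ⟨m, hm, fun v hv => ?_⟩
  rw [hlen]
  exact Nat.find_min' hex ⟨v, hv, rfl⟩

/-- Minimality in a coset is invariant under change of base point. -/
lemma coset_iff {I : Set S} {w w' v : W} (hww' : ∃ u ∈ WP cs I, w' = u * w) :
    (∃ u ∈ WP cs I, v = u * w) ↔ (∃ u ∈ WP cs I, v = u * w') := by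
  obtain ⟨u₀, hu₀, rfl⟩ := hww'
  constructor
  · rintro ⟨u, hu, rfl⟩
    exact ⟨u * u₀⁻¹, Subgroup.mul_mem _ hu (Subgroup.inv_mem _ hu₀), by group⟩
  · rintro ⟨u, hu, rfl⟩
    exact ⟨u * u₀, Subgroup.mul_mem _ hu hu₀, by group⟩

/-- Key additivity: if `m` has minimal length in `W_I m`, lengths add. -/
lemma length_mul_of_min {I : Set S} {m : W}
    (hmin : ∀ v, (∃ u ∈ WP cs I, v = u * m) → cs.length m ≤ cs.length v) :
    ∀ u ∈ WP cs I, cs.length (u * m) = cs.length u + cs.length m := by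
  have main : ∀ n : ℕ, ∀ u ∈ WP cs I, cs.length u ≤ n →
      cs.length (u * m) = cs.length u + cs.length m := by
    intro n
    induction n with
    | zero =>
      intro u hu hlen
      have : u = 1 := cs.length_eq_zero_iff.mp (by omega)
      subst this
      simp
    | succ n ihn =>
      intro u hu hlen
      rcases Nat.eq_zero_or_pos (cs.length u) with h0 | hpos
      · have : u = 1 := cs.length_eq_zero_iff.mp h0
        subst this
        simp
      obtain ⟨ω, hωI, hωred, rfl⟩ := exists_reduced_word_subset cs hu
      rcases ω with _ | ⟨i, rest⟩
      · rw [cs.wordProd_nil] at hpos ⊢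
        simp at hpos
      have hiI : i ∈ I := hωI i (by simp)
      have hrestI : ∀ a ∈ rest, a ∈ I := fun a ha => hωI a (by simp [ha])
      have hrestred : cs.IsReduced rest := by
        have := CoxeterSystem.IsReduced.drop (ω := i :: rest) hωred (j := 1)
        simpa using this
      have hu'mem : cs.wordProd rest ∈ WP cs I := wordProd_mem_WP cs hrestI
      set u' := cs.wordProd rest with hu'
      have hulen : cs.length (cs.wordProd (i :: rest)) = rest.length + 1 := by
        rw [hωred]
        simp
      have hu'len : cs.length u' = rest.length := hrestred
      have ihu' : cs.length (u' * m) = cs.length u' + cs.length m := by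
        apply ihn u' hu'mem
        omega
      -- a reduced word for u' * m
      obtain ⟨ωm, hωmred, hωmprod⟩ := cs.exists_reduced_word' m
      have hχred : cs.IsReduced (rest ++ ωm) := by
        show cs.length (cs.wordProd (rest ++ ωm)) = _
        rw [cs.wordProd_append, ← hωmprod, ihu', List.length_append]
        rw [hu'len, hωmprod, hωmred]
      have hkey : ¬ cs.length (cs.simple i * (u' * m)) < cs.length (u' * m) := by
        intro hdesc
        have hprodeq : cs.wordProd (rest ++ ωm) = u' * m := by
          rw [cs.wordProd_append, ← hωmprod]
        rw [← hprodeq] at hdesc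
        obtain ⟨l, hl, hlerase⟩ :=
          strong_exchange_left cs (rest ++ ωm) (cs.isReflection_simple i) hdesc
        rw [hprodeq] at hlerase
        rcases Nat.lt_or_ge l rest.length with hcase | hcase
        · rw [List.eraseIdx_append_of_lt_length hcase] at hlerase
          rw [cs.wordProd_append] at hlerase
          rw [← hωmprod] at hlerase
          have hcancel : cs.simple i * u' = cs.wordProd (rest.eraseIdx l) := by
            have := hlerase
            rw [← mul_assoc] at this
            exact mul_right_cancel this
          have hlb : cs.length (cs.simple i * u') ≤ (rest.eraseIdx l).length := by
            rw [hcancel]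
            exact cs.length_wordProd_le _
          have he : (rest.eraseIdx l).length + 1 = rest.length := List.length_eraseIdx_add_one hcase
          have : cs.simple i * u' = cs.wordProd (i :: rest) := by
            rw [cs.wordProd_cons]
          rw [this, hulen] at hlb
          omega
        · rw [List.eraseIdx_append_of_length_le hcase] at hlerase
          rw [cs.wordProd_append] at hlerase
          set m' := cs.wordProd (ωm.eraseIdx (l - rest.length)) with hm'
          have hm'coset : ∃ u ∈ WP cs I, m' = u * m := by
            refine ⟨u'⁻¹ * cs.simple i * u', ?_, ?_⟩
            · exact Subgroup.mul_mem _ (Subgroup.mul_mem _ (Subgroup.inv_mem _ hu'mem)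
                (simple_mem_WP cs hiI)) hu'mem
            · have : u' * m' = cs.simple i * (u' * m) := hlerase.symm
              calc m' = u'⁻¹ * (u' * m') := by group
                _ = u'⁻¹ * (cs.simple i * (u' * m)) := by rw [this]
                _ = u'⁻¹ * cs.simple i * u' * m := by group
          have h2 : (ωm.eraseIdx (l - rest.length)).length + 1 = ωm.length := by
            apply List.length_eraseIdx_add_one
            rw [List.length_append] at hl
            omega
          have h3 : cs.length m = ωm.length := by rw [hωmprod, hωmred]
          have h1 : cs.length m' ≤ (ωm.eraseIdx (l - rest.length)).length :=
            cs.length_wordProd_le _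
          have hmlb := hmin m' hm'coset
          omega
      have hfinal : cs.length (cs.simple i * (u' * m)) = cs.length (u' * m) + 1 := by
        rcases cs.length_simple_mul (u' * m) i with h | h
        · exact h
        · omega
      have : cs.wordProd (i :: rest) * m = cs.simple i * (u' * m) := by
        rw [cs.wordProd_cons, hu']
        group
      rw [this, hfinal, ihu', hulen, hu'len]
      omega
  intro u hu
  exact main (cs.length u) u hu le_rfl


lemma isLeftReduced_of_min {I : Set S} {m : W}
    (hmin : ∀ v, (∃ u ∈ WP cs I, v = u * m) → cs.length m ≤ cs.length v) :
    IsLeftReduced cs I m := by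
  intro s hs
  have h1 : cs.length m ≤ cs.length (cs.simple s * m) :=
    hmin _ ⟨cs.simple s, simple_mem_WP cs hs, rfl⟩
  have h2 := cs.length_simple_mul_ne m s
  omega

lemma eq_of_isLeftReduced_of_min {I : Set S} {m m' : W}
    (hm : IsLeftReduced cs I m)
    (hmin' : ∀ v, (∃ u ∈ WP cs I, v = u * m') → cs.length m' ≤ cs.length v)
    (hc : ∃ u ∈ WP cs I, m = u * m') : m = m' := by
  obtain ⟨u, hu, rfl⟩ := hc
  suffices hu1 : u = 1 by rw [hu1, one_mul]
  by_contra hne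
  obtain ⟨ω, hωI, hωred, huw⟩ := exists_reduced_word_subset cs hu
  rcases ω with _ | ⟨i, rest⟩
  · rw [huw, cs.wordProd_nil] at hne
    exact hne rfl
  have hiI : i ∈ I := hωI i (by simp)
  have hrestI : ∀ a ∈ rest, a ∈ I := fun a ha => hωI a (by simp [ha])
  have hrestred : cs.IsReduced rest := by
    have := CoxeterSystem.IsReduced.drop (ω := i :: rest) hωred (j := 1)
    simpa using this
  have hrestmem := wordProd_mem_WP cs hrestI
  have hlen1 : cs.length (u * m') = cs.length u + cs.length m' :=
    length_mul_of_min cs hmin' u hu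
  have hlen2 : cs.length (cs.wordProd rest * m') = rest.length + cs.length m' := by
    rw [length_mul_of_min cs hmin' _ hrestmem, hrestred]
  have hkey : cs.simple i * (u * m') = cs.wordProd rest * m' := by
    rw [huw, cs.wordProd_cons, mul_assoc, cs.simple_mul_simple_cancel_left]
  have hulen : cs.length u = rest.length + 1 := by
    rw [huw, hωred]
    simp
  have hred := hm i hiI
  rw [hkey, hlen2, hlen1, hulen] at hred
  omega

lemma min_of_isLeftReduced {I : Set S} {m : W} (hm : IsLeftReduced cs I m) :
    ∀ v, (∃ u ∈ WP cs I, v = u * m) → cs.length m ≤ cs.length v := by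
  obtain ⟨m₀, hc₀, hmin₀⟩ := exists_min_coset cs I m
  have hmin₀' : ∀ v, (∃ u ∈ WP cs I, v = u * m₀) → cs.length m₀ ≤ cs.length v := fun v hv =>
    hmin₀ v ((coset_iff cs hc₀).mpr hv)
  have hmm : ∃ u ∈ WP cs I, m = u * m₀ :=
    (coset_iff cs hc₀).mp ⟨1, Subgroup.one_mem _, (one_mul m).symm⟩
  have heq := eq_of_isLeftReduced_of_min cs hm hmin₀' hmm
  intro v hv
  rw [heq] at hv ⊢
  exact hmin₀' v hv

lemma length_mul_of_isLeftReduced {I : Set S} {m : W} (hm : IsLeftReduced cs I m) :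
    ∀ u ∈ WP cs I, cs.length (u * m) = cs.length u + cs.length m :=
  length_mul_of_min cs (min_of_isLeftReduced cs hm)

lemma isLeftReduced_inv_of_isRightReduced {J : Set S} {w : W} (hw : IsRightReduced cs J w) :
    IsLeftReduced cs J w⁻¹ := by
  intro s hs
  have h := hw s hs
  have e : cs.simple s * w⁻¹ = (w * cs.simple s)⁻¹ := by rw [mul_inv_rev, cs.inv_simple]
  rw [e, cs.length_inv, cs.length_inv]
  exact h

lemma length_mul_of_isRightReduced {J : Set S} {w : W} (hw : IsRightReduced cs J w) :
    ∀ x ∈ WP cs J, cs.length (w * x) = cs.length w + cs.length x := by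
  intro x hx
  have h := length_mul_of_isLeftReduced cs (isLeftReduced_inv_of_isRightReduced cs hw) x⁻¹
      (Subgroup.inv_mem _ hx)
  calc cs.length (w * x) = cs.length ((w*x)⁻¹) := (cs.length_inv _).symm
    _ = cs.length (x⁻¹ * w⁻¹) := by rw [mul_inv_rev]
    _ = cs.length x⁻¹ + cs.length w⁻¹ := h
    _ = cs.length w + cs.length x := by
        rw [cs.length_inv, cs.length_inv]
        omega

lemma tP_spec (I : Set S) (w : W) :
    (∃ u ∈ WP cs I, tP cs I w = u * w) ∧
      ∀ v, (∃ u ∈ WP cs I, v = u * w) → cs.length (tP cs I w) ≤ cs.length v :=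
  Classical.epsilon_spec (exists_min_coset cs I w)

lemma tP_coset (I : Set S) (w : W) : ∃ u ∈ WP cs I, tP cs I w = u * w := (tP_spec cs I w).1

lemma tP_min (I : Set S) (w : W) :
    ∀ v, (∃ u ∈ WP cs I, v = u * tP cs I w) → cs.length (tP cs I w) ≤ cs.length v := by
  obtain ⟨hc, hmin⟩ := tP_spec cs I w
  intro v hv
  exact hmin v ((coset_iff cs hc).mpr hv)

lemma tP_isLeftReduced (I : Set S) (w : W) : IsLeftReduced cs I (tP cs I w) :=
  isLeftReduced_of_min cs (tP_min cs I w)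

lemma tP_eq_of {I : Set S} {w m : W} (hm : IsLeftReduced cs I m)
    (hc : ∃ u ∈ WP cs I, m = u * w) : tP cs I w = m := by
  apply eq_of_isLeftReduced_of_min cs (tP_isLeftReduced cs I w) (min_of_isLeftReduced cs hm)
  obtain ⟨u₁, hu₁, e₁⟩ := tP_coset cs I w
  obtain ⟨u₂, hu₂, e₂⟩ := hc
  exact ⟨u₁ * u₂⁻¹, Subgroup.mul_mem _ hu₁ (Subgroup.inv_mem _ hu₂), by rw [e₁, e₂]; group⟩

lemma length_one_mem_WP {J : Set S} {x : W} (hx : x ∈ WP cs J) (hlen : cs.length x = 1) :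
    ∃ u ∈ J, x = cs.simple u := by
  obtain ⟨ω, hωJ, hωred, rfl⟩ := exists_reduced_word_subset cs hx
  have hl1 : ω.length = 1 := by
    rw [← hωred]
    exact hlen
  rcases ω with _ | ⟨u, rest⟩
  · simp at hl1
  · rcases rest with _ | ⟨v, rest'⟩
    · exact ⟨u, hωJ u (by simp), by rw [cs.wordProd_singleton]⟩
    · simp at hl1

/-! ### Part D: assembling the main theorem -/

lemma retrAux_nil' (I : Set S) (x : W) : retrAux cs I x [] = [] := rfl

lemma retrAux_cons' (I : Set S) (x : W) (p : S × Bool) (rest : List (S × Bool)) :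
    retrAux cs I x (p :: rest) =
      (if h : ∃ i ∈ I, cs.simple i = tP cs I x * cs.simple p.1 * (tP cs I x)⁻¹ then
        [(h.choose, p.2)] else []) ++ retrAux cs I (x * cs.simple p.1) rest := rfl

lemma retrAux_append (I : Set S) (x : W) (c c' : List (S × Bool)) :
    retrAux cs I x (c ++ c') =
      retrAux cs I x c ++ retrAux cs I (x * cs.wordProd (c.map Prod.fst)) c' := by
  induction c generalizing x with
  | nil =>
    rw [List.nil_append, retrAux_nil', List.nil_append, List.map_nil, cs.wordProd_nil, mul_one]
  | cons p c ih =>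
    rw [List.cons_append, retrAux_cons', retrAux_cons', ih, List.append_assoc]
    congr 2
    rw [List.map_cons, cs.wordProd_cons, ← mul_assoc]

/-- The subset `J₁`. -/
def JJ (I J : Set S) (w : W) : Set S :=
  {u | u ∈ J ∧ ∃ i ∈ I, cs.simple i = w * cs.simple u * w⁻¹}

lemma WPJJ_le (I J : Set S) (w : W) : WP cs (JJ cs I J w) ≤ WP cs J :=
  Subgroup.closure_mono (Set.image_mono (fun u hu => hu.1))

lemma conj_mem_WP_of_JJ {I J : Set S} {w : W} {x : W} (hx : x ∈ WP cs (JJ cs I J w)) :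
    w * x * w⁻¹ ∈ WP cs I := by
  refine Subgroup.closure_induction ?_ ?_ ?_ ?_ hx
  · rintro y ⟨u, hu, rfl⟩
    obtain ⟨i, hiI, hi⟩ := hu.2
    rw [← hi]
    exact simple_mem_WP cs hiI
  · simpa using Subgroup.one_mem (WP cs I)
  · intro y z _ _ hy hz
    have e : w * (y * z) * w⁻¹ = (w * y * w⁻¹) * (w * z * w⁻¹) := by group
    rw [e]
    exact Subgroup.mul_mem _ hy hz
  · intro y _ hy
    have e : w * y⁻¹ * w⁻¹ = (w * y * w⁻¹)⁻¹ := by group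
    rw [e]
    exact Subgroup.inv_mem _ hy

lemma key_conj {J : Set S} {w : W} (h2 : IsRightReduced cs J w)
    {x : W} (hx : x ∈ WP cs J) {i : S} (heq : w * x * w⁻¹ = cs.simple i) :
    ∃ u, (u ∈ J ∧ cs.simple i = w * cs.simple u * w⁻¹) ∧ x = cs.simple u := by
  have hwx : w * x = cs.simple i * w := by rw [← heq]; group
  have hl1 : cs.length (w * x) = cs.length w + cs.length x :=
    length_mul_of_isRightReduced cs h2 x hx
  have hlx : cs.length x = 1 := by
    rcases cs.length_simple_mul w i with h | h
    · rw [hwx, h] at hl1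
      omega
    · rw [hwx] at hl1
      omega
  obtain ⟨u, huJ, hxu⟩ := length_one_mem_WP cs hx hlx
  exact ⟨u, ⟨huJ, by rw [← heq, hxu]⟩, hxu⟩

lemma tP_JJ_mem {I J : Set S} {w : W} {v : W} (hv : v ∈ WP cs J) :
    tP cs (JJ cs I J w) v ∈ WP cs J := by
  obtain ⟨u', hu', e⟩ := tP_coset cs (JJ cs I J w) v
  rw [e]
  exact Subgroup.mul_mem _ (WPJJ_le cs I J w hu') hv

/-- Lemma B : `t_I(w v) = w ⬝ t_{J₁}(v)`. -/
lemma tP_conj {I J : Set S} {w : W} (h1 : IsLeftReduced cs I w) (h2 : IsRightReduced cs J w)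
    {v : W} (hv : v ∈ WP cs J) :
    tP cs I (w * v) = w * tP cs (JJ cs I J w) v := by
  set v₁ := tP cs (JJ cs I J w) v with hv₁
  have hv₁J : v₁ ∈ WP cs J := tP_JJ_mem cs hv
  apply tP_eq_of
  · -- IsLeftReduced I (w * v₁)
    intro s hs
    have hne := cs.length_simple_mul_ne (w * v₁) s
    rcases Nat.lt_or_ge (cs.length (w * v₁)) (cs.length (cs.simple s * (w * v₁))) with h | h
    · exact h
    have hdesc : cs.length (cs.simple s * (w * v₁)) < cs.length (w * v₁) := by omega
    exfalso
    obtain ⟨ωw, hωwred, hωwprod⟩ := cs.exists_reduced_word' w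
    obtain ⟨ωv, hωvJ, hωvred, hωvprod⟩ := exists_reduced_word_subset cs hv₁J
    have hprodeq : cs.wordProd (ωw ++ ωv) = w * v₁ := by
      rw [cs.wordProd_append, ← hωwprod, ← hωvprod]
    have hχred : cs.IsReduced (ωw ++ ωv) := by
      show cs.length (cs.wordProd (ωw ++ ωv)) = _
      rw [hprodeq, length_mul_of_isRightReduced cs h2 v₁ hv₁J, List.length_append]
      rw [hωwprod, hωwred, hωvprod, hωvred]
    rw [← hprodeq] at hdesc
    obtain ⟨j, hj, hlerase⟩ :=
      strong_exchange_left cs (ωw ++ ωv) (cs.isReflection_simple s) hdesc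
    rw [hprodeq] at hlerase
    rcases Nat.lt_or_ge j ωw.length with hcase | hcase
    · rw [List.eraseIdx_append_of_lt_length hcase, cs.wordProd_append, ← hωvprod] at hlerase
      have hcancel : cs.simple s * w = cs.wordProd (ωw.eraseIdx j) := by
        have e : cs.simple s * w * v₁ = cs.wordProd (ωw.eraseIdx j) * v₁ := by
          rw [mul_assoc]
          exact hlerase
        exact mul_right_cancel e
      have hlb : cs.length (cs.simple s * w) ≤ (ωw.eraseIdx j).length := by
        rw [hcancel]
        exact cs.length_wordProd_le _
      have he : (ωw.eraseIdx j).length + 1 = ωw.length := List.length_eraseIdx_add_one hcase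
      have hwlen : cs.length w = ωw.length := by rw [hωwprod, hωwred]
      have := h1 s hs
      omega
    · rw [List.eraseIdx_append_of_length_le hcase, cs.wordProd_append, ← hωwprod] at hlerase
      set ρ := cs.wordProd (ωv.eraseIdx (j - ωw.length)) with hρ
      have hρJ : ρ ∈ WP cs J := by
        apply wordProd_mem_WP
        intro a ha
        exact hωvJ a ((List.eraseIdx_sublist ωv (j - ωw.length)).mem ha)
      set x := w⁻¹ * cs.simple s * w with hx
      have hxval : x = ρ * v₁⁻¹ := by
        rw [hx]
        have e : cs.simple s * (w * v₁) = w * ρ := hlerase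
        calc w⁻¹ * cs.simple s * w = w⁻¹ * (cs.simple s * (w * v₁)) * v₁⁻¹ := by group
          _ = w⁻¹ * (w * ρ) * v₁⁻¹ := by rw [e]
          _ = ρ * v₁⁻¹ := by group
      have hxJ : x ∈ WP cs J := by
        rw [hxval]
        exact Subgroup.mul_mem _ hρJ (Subgroup.inv_mem _ hv₁J)
      have heq : w * x * w⁻¹ = cs.simple s := by rw [hx]; group
      obtain ⟨u, ⟨huJ, hui⟩, hxu⟩ := key_conj cs h2 hxJ heq
      have huJ₁ : u ∈ JJ cs I J w := ⟨huJ, s, hs, hui⟩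
      have hsw : cs.simple s * (w * v₁) = w * (cs.simple u * v₁) := by
        calc cs.simple s * (w * v₁) = (w * x * w⁻¹) * (w * v₁) := by rw [heq]
          _ = w * (x * v₁) := by group
          _ = w * (cs.simple u * v₁) := by rw [hxu]
      have hlen1 : cs.length (w * (cs.simple u * v₁))
          = cs.length w + cs.length (cs.simple u * v₁) :=
        length_mul_of_isRightReduced cs h2 _
          (Subgroup.mul_mem _ (simple_mem_WP cs huJ) hv₁J)
      have hlen2 : cs.length (w * v₁) = cs.length w + cs.length v₁ :=
        length_mul_of_isRightReduced cs h2 _ hv₁J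
      have hred := tP_isLeftReduced cs (JJ cs I J w) v u huJ₁
      rw [← hv₁] at hred
      rw [hprodeq] at hdesc
      rw [hsw, hlen1, hlen2] at hdesc
      omega
  · -- coset
    obtain ⟨u', hu', e⟩ := tP_coset cs (JJ cs I J w) v
    refine ⟨w * u' * w⁻¹, conj_mem_WP_of_JJ cs hu', ?_⟩
    rw [← hv₁] at e
    rw [e]
    group

lemma phiW_append (x : W) (l₁ l₂ : List (S × Bool)) :
    phiW cs x (l₁ ++ l₂) = phiW cs x l₁ ++ phiW cs x l₂ :=
  List.map_append

/-- The main inductive lemma. -/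
lemma retrAux_eq {I J : Set S} {w : W} (h1 : IsLeftReduced cs I w) (h2 : IsRightReduced cs J w)
    (c : List (S × Bool)) :
    ∀ v, v ∈ WP cs J → (∀ p ∈ c, p.1 ∈ J) →
      retrAux cs I (w * v) c = phiW cs w (retrAux cs (JJ cs I J w) v c) := by
  induction c with
  | nil =>
    intro v _ _
    rfl
  | cons p c ih =>
    intro v hv hc
    have hpJ : p.1 ∈ J := hc p (by simp)
    have htail := ih (v * cs.simple p.1)
      (Subgroup.mul_mem _ hv (simple_mem_WP cs hpJ))
      (fun q hq => hc q (by simp [hq]))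
    rw [retrAux_cons', retrAux_cons', phiW_append]
    have hB : tP cs I (w * v) = w * tP cs (JJ cs I J w) v := tP_conj cs h1 h2 hv
    set v₁ := tP cs (JJ cs I J w) v with hv₁
    have hv₁J : v₁ ∈ WP cs J := tP_JJ_mem cs hv
    by_cases hR : ∃ u ∈ JJ cs I J w,
        cs.simple u = tP cs (JJ cs I J w) v * cs.simple p.1 * (tP cs (JJ cs I J w) v)⁻¹
    · obtain ⟨u₀, hu₀J₁, hu₀⟩ := hR
      have hL : ∃ i ∈ I,
          cs.simple i = tP cs I (w * v) * cs.simple p.1 * (tP cs I (w * v))⁻¹ := by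
        obtain ⟨i₀, hi₀I, hi₀⟩ := hu₀J₁.2
        refine ⟨i₀, hi₀I, ?_⟩
        rw [hi₀, hu₀, hB, ← hv₁]
        group
      rw [dif_pos hL, dif_pos (⟨u₀, hu₀J₁, hu₀⟩ : ∃ u ∈ JJ cs I J w,
        cs.simple u = tP cs (JJ cs I J w) v * cs.simple p.1 * (tP cs (JJ cs I J w) v)⁻¹)]
      congr 1
      · -- heads
        set hR' : ∃ u ∈ JJ cs I J w,
            cs.simple u = tP cs (JJ cs I J w) v * cs.simple p.1 * (tP cs (JJ cs I J w) v)⁻¹ :=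
          ⟨u₀, hu₀J₁, hu₀⟩ with hRdef
        obtain ⟨hchJ₁, hch⟩ := hR'.choose_spec
        obtain ⟨i₁, hi₁I, hi₁⟩ := hchJ₁.2
        have hepsspec : cs.simple (@Classical.epsilon S ⟨hR'.choose⟩
            (fun i : S => cs.simple i = w * cs.simple hR'.choose * w⁻¹))
            = w * cs.simple hR'.choose * w⁻¹ :=
          @Classical.epsilon_spec S
            (fun i : S => cs.simple i = w * cs.simple hR'.choose * w⁻¹) ⟨i₁, hi₁⟩
        obtain ⟨hchI, hchL⟩ := hL.choose_spec
        have hcheq : cs.simple hL.choose = cs.simple (@Classical.epsilon S ⟨hR'.choose⟩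
            (fun i : S => cs.simple i = w * cs.simple hR'.choose * w⁻¹)) := by
          rw [hepsspec, hchL, hch, hB, ← hv₁]
          group
        have := simple_injective cs hcheq
        show [(hL.choose, p.2)] = [((@Classical.epsilon S ⟨hR'.choose⟩
            (fun i : S => cs.simple i = w * cs.simple hR'.choose * w⁻¹)), p.2)]
        rw [this]
      · -- tails
        rw [mul_assoc]
        exact htail
    · have hL : ¬ ∃ i ∈ I,
          cs.simple i = tP cs I (w * v) * cs.simple p.1 * (tP cs I (w * v))⁻¹ := by
        intro hLpos
        apply hR
        obtain ⟨i, hiI, hi⟩ := hLpos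
        set x := v₁ * cs.simple p.1 * v₁⁻¹ with hx
        have hxJ : x ∈ WP cs J := by
          rw [hx]
          exact Subgroup.mul_mem _ (Subgroup.mul_mem _ hv₁J (simple_mem_WP cs hpJ))
            (Subgroup.inv_mem _ hv₁J)
        have heq : w * x * w⁻¹ = cs.simple i := by
          rw [hx, hi, hB]
          group
        obtain ⟨u, ⟨huJ, hui⟩, hxu⟩ := key_conj cs h2 hxJ heq
        refine ⟨u, ⟨huJ, i, hiI, hui⟩, ?_⟩
        rw [← hxu, hx]
      rw [dif_neg hL, dif_neg hR]
      simp only [phiW, List.map_nil, List.nil_append]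
      rw [mul_assoc]
      exact htail


/-- If `pr(b)` is `I`-reduced-`J` and `b'` is a word on `J`, then, setting
`J₁ := {u ∈ J : pr(b) u pr(b)⁻¹ ∈ I}`, one has
`π̂_I(b ++ b') = π̂_I(b) ++ ψ(π̂_{J₁}(b'))` where `ψ` replaces each letter `(u, ε)` by
`(pr(b) u pr(b)⁻¹, ε)`. -/
theorem retr_append_reduced (cs : CoxeterSystem M W) (I J : Set S)
    (b b' : List (S × Bool))
    (h1 : IsLeftReduced cs I (prW cs b)) (h2 : IsRightReduced cs J (prW cs b))
    (hb' : ∀ p ∈ b', p.1 ∈ J) :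
    retr cs I (b ++ b') =
      retr cs I b ++ phiW cs (prW cs b)
        (retr cs {u | u ∈ J ∧ ∃ i ∈ I,
            cs.simple i = prW cs b * cs.simple u * (prW cs b)⁻¹} b') := by
  have hJJ : {u | u ∈ J ∧ ∃ i ∈ I,
      cs.simple i = prW cs b * cs.simple u * (prW cs b)⁻¹} = JJ cs I J (prW cs b) := rfl
  rw [hJJ]
  show retrAux cs I 1 (b ++ b') = _
  rw [retrAux_append]
  congr 1
  have hw : (1 : W) * cs.wordProd (b.map Prod.fst) = prW cs b * 1 := by
    rw [one_mul, mul_one]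
    rfl
  rw [hw]
  exact retrAux_eq cs h1 h2 b' 1 (Subgroup.one_mem _) hb'

end
end DGM
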